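/- Let S be a round sphere in ℝ³ and let C = S ∩ P be a single round circle contained in S, where P is a 2-dimensional affine subspace of ℝ³ whose distance from the center of S is strictly less than the radius of S. Then S \ C, as a topological subspace, has exactly two connected components. -/

import Mathlib

open Metric
open scoped RealInnerProductSpace

set_option maxHeartbeats 1000000 in
private lemma cap_key {R t a u s b m : ℝ} (hR : 0 < R) (htR : t < R) (htR' : -R ≤ t)
    (hta : t < a) (haR : a ≤ R) (hu : 0 ≤ u) (hs : 0 ≤ s) (hus : u + s = 1)
    (hb : b = u*a + s*R) (hm : 0 ≤ m) (hm2 : m^2 = u^2*R^2 + s^2*R^2 + 2*u*s*R*a) :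
    0 < m ∧ t*m < R*b := by
  have haR' : -R < a := lt_of_le_of_lt htR' hta
  have hmpos : 0 < m := by
    rcases hm.lt_or_eq with h | h
    · exact h
    · exfalso
      have hm0 : m^2 = 0 := by rw [← h]; ring
      rcases (mul_nonneg hu hs).eq_or_lt with hus0 | hus0
      · rcases mul_eq_zero.1 hus0.symm with h0 | h0
        · have hs1 : s = 1 := by linarith
          subst h0 hs1
          nlinarith
        · have hu1 : u = 1 := by linarith
          subst h0 hu1
          nlinarith
      · nlinarith [sq_nonneg (u - s), mul_pos (mul_pos hus0 hR) (show (0:ℝ) < a + R by linarith)]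
  refine ⟨hmpos, ?_⟩
  have hbt : t < b := by nlinarith
  have hmR : m ≤ R := by
    have hR2 : R^2 = u^2*R^2 + s^2*R^2 + 2*u*s*R^2 := by linear_combination (-(R^2)*(u+s+1))*hus
    have h1 : m^2 ≤ R^2 := by
      nlinarith [hR2, mul_nonneg (mul_nonneg (mul_nonneg hu hs) hR.le) (sub_nonneg.2 haR)]
    have hm' : 0 < m + R := by linarith
    nlinarith [h1, hm']
  rcases le_or_gt 0 t with ht0 | ht0
  · have h1 : t * m ≤ t * R := by nlinarith
    have h2 : t * R < R * b := by nlinarith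
    linarith
  · rcases le_or_gt 0 b with hb0 | hb0
    · have : t * m < 0 := mul_neg_of_neg_of_pos ht0 hmpos
      nlinarith
    · have ha0 : a < 0 := by nlinarith
      have hu0 : 0 < u := by nlinarith
      have ha2 : a^2 < t^2 := by nlinarith
      have hsra : s*R + 2*u*a < 0 := by nlinarith
      have hid : (t*m)^2 - (R*b)^2
          = u^2*R^2*(t^2-a^2) + (s*R)*((R^2-t^2)*(-(s*R+2*u*a))) := by
        linear_combination t^2 * hm2 - R^2*(b + (u*a + s*R)) * hb
      have hp1 : 0 < u^2*R^2*(t^2-a^2) :=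
        mul_pos (mul_pos (pow_pos hu0 2) (pow_pos hR 2)) (by linarith)
      have hp2 : 0 ≤ (s*R)*((R^2-t^2)*(-(s*R+2*u*a))) :=
        mul_nonneg (mul_nonneg hs hR.le)
          (mul_nonneg (by nlinarith) (by linarith))
      have hkey : (R*b)^2 < (t*m)^2 := by linarith
      nlinarith [mul_neg_of_neg_of_pos ht0 hmpos, mul_neg_of_pos_of_neg hR hb0]

private lemma cap_isPathConnected {E : Type*} [NormedAddCommGroup E] [InnerProductSpace ℝ E]
    (n : E) (hn : ‖n‖ = 1) {R t : ℝ} (hR : 0 < R)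
    (ht1 : -R ≤ t) (ht2 : t < R) :
    IsPathConnected {x : E | ‖x‖ = R ∧ t < ⟪n, x⟫} := by
  have hnn : ⟪n, n⟫ = 1 := by
    rw [real_inner_self_eq_norm_sq, hn]; norm_num
  have hpole : (R • n) ∈ {x : E | ‖x‖ = R ∧ t < ⟪n, x⟫} := by
    constructor
    · rw [norm_smul, hn]; simp [abs_of_pos hR]
    · rw [inner_smul_right, hnn]; simpa using ht2
  refine ⟨R • n, hpole, ?_⟩
  intro x hx
  refine JoinedIn.symm ?_
  obtain ⟨hxR, hxt⟩ := hx
  set v : ℝ → E := fun s => (1-s) • x + s • (R • n) with hv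
  have key : ∀ s : ℝ, 0 ≤ s → s ≤ 1 → 0 < ‖v s‖ ∧ t * ‖v s‖ < R * ⟪n, v s⟫ := by
    intro s hs0 hs1
    have hxx : ⟪x, x⟫ = R^2 := by rw [real_inner_self_eq_norm_sq, hxR]
    have hinner : ⟪n, v s⟫ = (1-s) * ⟪n, x⟫ + s * R := by
      simp only [hv, inner_add_right, inner_smul_right, hnn]; ring
    have hxn : ⟪n, x⟫ ≤ R := by
      calc ⟪n, x⟫ ≤ ‖n‖ * ‖x‖ := real_inner_le_norm n x
      _ = R := by rw [hxR, hn]; ring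
    have hnorm2 : ‖v s‖^2 = (1-s)^2*R^2 + s^2*R^2 + 2*(1-s)*s*R*⟪n, x⟫ := by
      rw [show ‖v s‖^2 = ⟪v s, v s⟫ from (real_inner_self_eq_norm_sq _).symm]
      simp only [hv, inner_add_left, inner_add_right, inner_smul_left, inner_smul_right,
        conj_trivial, hxx, hnn, real_inner_comm x n]
      ring
    exact cap_key (a := ⟪n, x⟫) (b := ⟪n, v s⟫) (m := ‖v s‖) hR ht2 ht1 hxt hxn
      (by linarith) hs0 (by linarith) hinner (norm_nonneg _) hnorm2
  have hvc : Continuous v := by fun_prop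
  have hne : ∀ s : unitInterval, ‖v s‖ ≠ 0 := fun s => (key s s.2.1 s.2.2).1.ne'
  refine ⟨⟨⟨fun s : unitInterval => (R / ‖v s‖) • v s, ?_⟩, ?_, ?_⟩, ?_⟩
  · apply Continuous.smul
    · exact continuous_const.div ((hvc.comp continuous_subtype_val).norm) hne
    · exact hvc.comp continuous_subtype_val
  · show (R / ‖v 0‖) • v 0 = x
    have h0 : v 0 = x := by simp [hv]
    rw [h0, hxR, div_self hR.ne', one_smul]
  · show (R / ‖v 1‖) • v 1 = R • n
    have h1 : v 1 = R • n := by simp [hv]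
    rw [h1, norm_smul, hn, mul_one, Real.norm_eq_abs, abs_of_pos hR, div_self hR.ne', one_smul]
  · intro s
    obtain ⟨hm, hlt⟩ := key s s.2.1 s.2.2
    constructor
    · show ‖(R / ‖v s‖) • v s‖ = R
      rw [norm_smul, Real.norm_eq_abs, abs_of_pos (div_pos hR hm), div_mul_cancel₀ _ hm.ne']
    · show t < ⟪n, (R / ‖v s‖) • v s⟫
      rw [inner_smul_right, div_mul_eq_mul_div, lt_div_iff₀ hm]
      linarith

/-- Removing a single round circle from a round sphere in `ℝ³`
leaves exactly two connected components. -/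
theorem sphere_minus_circle_two_components
    (c : EuclideanSpace ℝ (Fin 3)) (R : ℝ) (hR : 0 < R)
    (P : AffineSubspace ℝ (EuclideanSpace ℝ (Fin 3)))
    (hdim : Module.finrank ℝ P.direction = 2)
    (hdist : Metric.infDist c (P : Set (EuclideanSpace ℝ (Fin 3))) < R) :
    Cardinal.mk
      (ConnectedComponents
        ↥(Metric.sphere c R \
            (Metric.sphere c R ∩ (P : Set (EuclideanSpace ℝ (Fin 3)))))) = 2 := by
  -- the plane is nonempty
  have hPne : (P : Set (EuclideanSpace ℝ (Fin 3))).Nonempty := by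
    rcases P.eq_bot_or_nonempty with h | h
    · exfalso; rw [h, AffineSubspace.direction_bot] at hdim; simp at hdim
    · exact h
  obtain ⟨q, hq⟩ := hPne
  -- a unit normal vector
  have horth : Module.finrank ℝ (P.directionᗮ) = 1 := by
    have h1 := Submodule.finrank_add_finrank_orthogonal P.direction
    have h3 : Module.finrank ℝ (EuclideanSpace ℝ (Fin 3)) = 3 := finrank_euclideanSpace_fin
    omega
  obtain ⟨v, hv0, hvspan⟩ :
      ∃ v : EuclideanSpace ℝ (Fin 3), v ≠ 0 ∧ P.directionᗮ = Submodule.span ℝ {v} := by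
    obtain ⟨v, hv0, hv⟩ := finrank_eq_one_iff'.mp horth
    refine ⟨v, by simpa using hv0, le_antisymm ?_ ?_⟩
    · intro w hw
      obtain ⟨a, ha⟩ := hv ⟨w, hw⟩
      exact Submodule.mem_span_singleton.mpr ⟨a, by simpa using congrArg Subtype.val ha⟩
    · rw [Submodule.span_le, Set.singleton_subset_iff]; exact v.2
  set n : EuclideanSpace ℝ (Fin 3) := ‖v‖⁻¹ • v with hn_def
  have hn : ‖n‖ = 1 := by
    simpa using norm_smul_inv_norm (𝕜 := ℝ) hv0
  have hnspan : Submodule.span ℝ {n} = P.directionᗮ := by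
    rw [hvspan, hn_def]
    exact Submodule.span_singleton_smul_eq
      (isUnit_iff_ne_zero.mpr (inv_ne_zero (norm_ne_zero_iff.mpr hv0))) v
  have hdir : P.direction = (Submodule.span ℝ {n})ᗮ := by
    rw [hnspan, Submodule.orthogonal_orthogonal]
  -- membership in P via the normal
  have hmemP : ∀ x : EuclideanSpace ℝ (Fin 3), x ∈ P ↔ ⟪n, x - q⟫ = 0 := by
    intro x
    rw [← AffineSubspace.vsub_right_mem_direction_iff_mem hq x, hdir]
    rw [show x -ᵥ q = x - q from rfl]
    rw [Submodule.mem_orthogonal_singleton_iff_inner_left, real_inner_comm]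
  set t : ℝ := ⟪n, q - c⟫ with ht_def
  have hmemP' : ∀ x : EuclideanSpace ℝ (Fin 3), x ∈ P ↔ ⟪n, x - c⟫ = t := by
    intro x
    rw [hmemP x, ht_def]
    constructor <;> intro h
    · have : ⟪n, (x - c) - (q - c)⟫ = 0 := by
        rw [show (x - c) - (q - c) = x - q by abel]; exact h
      rw [inner_sub_right] at this; linarith
    · rw [show x - q = (x - c) - (q - c) by abel, inner_sub_right, h]; ring
  -- |t| < R
  have htR : |t| < R := by
    obtain ⟨y, hyP, hyd⟩ := (Metric.infDist_lt_iff ⟨q, hq⟩).mp hdist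
    have hyt : ⟪n, y - c⟫ = t := (hmemP' y).mp hyP
    calc |t| = |⟪n, y - c⟫| := by rw [hyt]
    _ ≤ ‖n‖ * ‖y - c‖ := abs_real_inner_le_norm n (y - c)
    _ = dist c y := by rw [hn, one_mul, ← dist_eq_norm, dist_comm]
    _ < R := hyd
  have ht1 : -R < t := neg_lt_of_abs_lt htR
  have ht2 : t < R := lt_of_abs_lt htR
  set W : Set (EuclideanSpace ℝ (Fin 3)) := Metric.sphere c R \ (Metric.sphere c R ∩ (P : Set (EuclideanSpace ℝ (Fin 3)))) with hW_def
  have hmemW : ∀ x : EuclideanSpace ℝ (Fin 3), x ∈ W ↔ ‖x - c‖ = R ∧ ⟪n, x - c⟫ ≠ t := by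
    intro x
    constructor
    · rintro ⟨hxS, hxP⟩
      refine ⟨by rw [← dist_eq_norm]; exact hxS, fun h => hxP ⟨hxS, (hmemP' x).mpr h⟩⟩
    · rintro ⟨h1, h2⟩
      have hxS : x ∈ Metric.sphere c R := by rw [mem_sphere, dist_eq_norm]; exact h1
      exact ⟨hxS, fun hx => h2 ((hmemP' x).mp hx.2)⟩
  set X := ↥W
  set U : Set X := {x : X | t < ⟪n, (x : EuclideanSpace ℝ (Fin 3)) - c⟫} with hU_def
  have hcont : Continuous fun x : X => ⟪n, (x : EuclideanSpace ℝ (Fin 3)) - c⟫ :=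
    Continuous.inner continuous_const (continuous_subtype_val.sub continuous_const)
  have hne : ∀ x : X, ⟪n, (x : EuclideanSpace ℝ (Fin 3)) - c⟫ ≠ t := fun x => ((hmemW x).mp x.2).2
  have hUo : IsOpen U := isOpen_Ioi.preimage hcont
  have hUc : IsClosed U := by
    rw [← isOpen_compl_iff]
    have : Uᶜ = (fun x : X => ⟪n, (x : EuclideanSpace ℝ (Fin 3)) - c⟫) ⁻¹' Set.Iio t := by
      ext x
      simp only [hU_def, Set.mem_compl_iff, Set.mem_setOf_eq, not_lt, Set.mem_preimage,
        Set.mem_Iio]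
      exact ⟨fun h => lt_of_le_of_ne h (hne x), le_of_lt⟩
    rw [this]
    exact isOpen_Iio.preimage hcont
  have hclopen : IsClopen U := ⟨hUc, hUo⟩
  have hbi : Continuous U.boolIndicator := (continuous_boolIndicator_iff_isClopen U).mpr hclopen
  -- the two caps are path-connected
  have hAconn : IsPreconnected U := by
    have hA : IsPathConnected {x : EuclideanSpace ℝ (Fin 3) | ‖x - c‖ = R ∧ t < ⟪n, x - c⟫} := by
      have h0 := cap_isPathConnected n hn hR ht1.le ht2
      have himg := h0.image (f := fun y : EuclideanSpace ℝ (Fin 3) => y + c) (by fun_prop)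
      convert himg using 1
      ext x
      constructor
      · rintro ⟨h1, h2⟩; exact ⟨x - c, ⟨h1, h2⟩, sub_add_cancel x c⟩
      · rintro ⟨y, ⟨h1, h2⟩, rfl⟩; simpa [add_sub_cancel_right] using ⟨h1, h2⟩
    have hval : Subtype.val '' U = {x : EuclideanSpace ℝ (Fin 3) | ‖x - c‖ = R ∧ t < ⟪n, x - c⟫} := by
      ext x
      constructor
      · rintro ⟨⟨x, hxW⟩, hxU, rfl⟩
        exact ⟨((hmemW x).mp hxW).1, hxU⟩
      · rintro ⟨h1, h2⟩
        exact ⟨⟨x, (hmemW x).mpr ⟨h1, ne_of_gt h2⟩⟩, h2, rfl⟩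
    have := (Topology.IsInducing.subtypeVal (t := W)).isPreconnected_image (s := U)
    rw [hval] at this
    exact this.mp hA.isConnected.isPreconnected
  have hBconn : IsPreconnected Uᶜ := by
    have hB : IsPathConnected {x : EuclideanSpace ℝ (Fin 3) | ‖x - c‖ = R ∧ ⟪n, x - c⟫ < t} := by
      have h0 := cap_isPathConnected (-n) (by simpa using hn) hR
        (t := -t) (by linarith) (by linarith)
      have himg := h0.image (f := fun y : EuclideanSpace ℝ (Fin 3) => y + c) (by fun_prop)
      convert himg using 1
      ext x
      constructor
      · rintro ⟨h1, h2⟩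
        exact ⟨x - c, ⟨h1, by rw [inner_neg_left]; linarith⟩, sub_add_cancel x c⟩
      · rintro ⟨y, ⟨h1, h2⟩, rfl⟩
        rw [inner_neg_left] at h2
        exact ⟨by simpa [add_sub_cancel_right] using h1, by
          simpa [add_sub_cancel_right] using (by linarith : ⟪n, y⟫ < t)⟩
    have hval : Subtype.val '' Uᶜ = {x : EuclideanSpace ℝ (Fin 3) | ‖x - c‖ = R ∧ ⟪n, x - c⟫ < t} := by
      ext x
      constructor
      · rintro ⟨⟨x, hxW⟩, hxU, rfl⟩
        refine ⟨((hmemW x).mp hxW).1, ?_⟩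
        have := ((hmemW x).mp hxW).2
        simp only [hU_def, Set.mem_compl_iff, Set.mem_setOf_eq, not_lt] at hxU
        have hxU' : ¬ t < ⟪n, x - c⟫ := hxU
        exact lt_of_le_of_ne (not_lt.mp hxU') this
      · rintro ⟨h1, h2⟩
        refine ⟨⟨x, (hmemW x).mpr ⟨h1, ne_of_lt h2⟩⟩, ?_, rfl⟩
        simp only [hU_def, Set.mem_compl_iff, Set.mem_setOf_eq, not_lt]
        exact fun h => (not_lt.mpr (le_of_lt h2)) h
    have := (Topology.IsInducing.subtypeVal (t := W)).isPreconnected_image (s := Uᶜ)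
    rw [hval] at this
    exact this.mp hB.isConnected.isPreconnected
  -- the two poles
  have hnn : ⟪n, n⟫ = 1 := by rw [real_inner_self_eq_norm_sq, hn]; norm_num
  have hpA : (c + R • n) ∈ W := by
    rw [hmemW]
    constructor
    · rw [add_sub_cancel_left, norm_smul, hn, Real.norm_eq_abs, abs_of_pos hR, mul_one]
    · rw [add_sub_cancel_left, inner_smul_right, hnn, mul_one]; exact ne_of_gt ht2
  have hpB : (c + (-R) • n) ∈ W := by
    rw [hmemW]
    constructor
    · rw [add_sub_cancel_left, norm_smul, hn, Real.norm_eq_abs, abs_of_neg (by linarith), mul_one]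
      ring
    · rw [add_sub_cancel_left, inner_smul_right, hnn, mul_one]
      exact ne_of_lt (by linarith)
  have hpAU : (⟨c + R • n, hpA⟩ : X) ∈ U := by
    simp only [hU_def, Set.mem_setOf_eq, add_sub_cancel_left, inner_smul_right, hnn, mul_one]
    change t < ⟪n, (c + R • n) - c⟫
    rw [add_sub_cancel_left, inner_smul_right, hnn, mul_one]
    exact ht2
  have hpBU : (⟨c + (-R) • n, hpB⟩ : X) ∉ U := by
    simp only [hU_def, Set.mem_setOf_eq, add_sub_cancel_left, inner_smul_right, hnn, mul_one]
    intro h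
    change t < ⟪n, (c + (-R) • n) - c⟫ at h
    rw [add_sub_cancel_left, inner_smul_right, hnn, mul_one] at h
    linarith
  -- the lifted map to Bool is a bijection
  set g : ConnectedComponents X → Bool := hbi.connectedComponentsLift with hg_def
  have hgcoe : ∀ x : X, g (ConnectedComponents.mk x) = U.boolIndicator x := fun x => rfl
  have hbij : Function.Bijective g := by
    constructor
    · intro a b hab
      obtain ⟨x, rfl⟩ := ConnectedComponents.surjective_coe a
      obtain ⟨y, rfl⟩ := ConnectedComponents.surjective_coe b
      rw [hgcoe, hgcoe] at hab
      by_cases hx : x ∈ U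
      · have hy : y ∈ U := by
          rw [Set.mem_iff_boolIndicator] at hx ⊢
          rw [← hab]; exact hx
        exact ConnectedComponents.coe_eq_coe.mpr
          (connectedComponent_eq (hAconn.subset_connectedComponent hx hy))
      · have hy : y ∉ U := by
          rw [Set.mem_iff_boolIndicator] at hx ⊢
          rw [← hab]; exact hx
        exact ConnectedComponents.coe_eq_coe.mpr
          (connectedComponent_eq (hBconn.subset_connectedComponent hx hy))
    · intro b
      cases b
      · refine ⟨ConnectedComponents.mk ⟨c + (-R) • n, hpB⟩, ?_⟩
        rw [hgcoe]
        exact (Set.notMem_iff_boolIndicator _ _).mp hpBU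
      · refine ⟨ConnectedComponents.mk ⟨c + R • n, hpA⟩, ?_⟩
        rw [hgcoe]
        exact (Set.mem_iff_boolIndicator _ _).mp hpAU
  calc Cardinal.mk (ConnectedComponents X) = Cardinal.mk Bool :=
        Cardinal.mk_congr (Equiv.ofBijective g hbij)
    _ = 2 := Cardinal.mk_bool
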